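/- Let X be an infinite, locally finite, connected simple graph with a graph height function (h,Γ) such that Γ acts transitively on X. Then for all n, k ≥ 1 and all integers a_1 > a_2 > … > a_k > 0: h_n(a_1,…,a_k) ≤ Σ_{m=0}^{n} b_m(a_1 + a_3 + …) · b̄_{n−m}(a_2 + a_4 + …), where a_1 + a_3 + … is the sum of the odd-indexed spans and a_2 + a_4 + … the sum of the even-indexed spans. -/

import Mathlib

open Filter Finset

noncomputable section

variable {V : Type*}

/-- `w : ℕ → V` represents a walk of length `n` from `v`: consecutive vertices are
adjacent and the values are pinned to `w n` from index `n` on. -/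
noncomputable def IsWalkFrom (G : SimpleGraph V) (n : ℕ) (v : V) (w : ℕ → V) : Prop :=
  w 0 = v ∧ (∀ i < n, G.Adj (w i) (w (i + 1))) ∧ (∀ i, n ≤ i → w i = w n)

/-- A self-avoiding walk of length `n` starting at `v`. -/
noncomputable def IsSAWFrom (G : SimpleGraph V) (n : ℕ) (v : V) (w : ℕ → V) : Prop :=
  IsWalkFrom G n v w ∧ Set.InjOn w (Set.Iic n)

/-- A bridge with respect to the height function `h`. -/
noncomputable def IsBridgeFrom (G : SimpleGraph V) (h : V → ℤ) (n : ℕ) (v : V) (w : ℕ → V) : Prop :=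
  IsSAWFrom G n v w ∧ ∀ i, 1 ≤ i → i ≤ n → h (w 0) < h (w i) ∧ h (w i) ≤ h (w n)

/-- A reversed bridge with respect to the height function `h`. -/
noncomputable def IsRBridgeFrom (G : SimpleGraph V) (h : V → ℤ) (n : ℕ) (v : V) (w : ℕ → V) : Prop :=
  IsSAWFrom G n v w ∧ ∀ i, 1 ≤ i → i ≤ n → h (w 0) > h (w i) ∧ h (w i) ≥ h (w n)

/-- A half-space walk with respect to the height function `h`. -/
noncomputable def IsHSWFrom (G : SimpleGraph V) (h : V → ℤ) (n : ℕ) (v : V) (w : ℕ → V) : Prop :=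
  IsSAWFrom G n v w ∧ ∀ i, 1 ≤ i → i ≤ n → h (w 0) < h (w i)

/-- The span of (the first `n+1` vertices of) a walk. -/
noncomputable def walkSpan (h : V → ℤ) (n : ℕ) (w : ℕ → V) : ℤ :=
  ((Finset.range (n + 1)).sup' ⟨0, by simp⟩ fun i => h (w i)) -
    ((Finset.range (n + 1)).inf' ⟨0, by simp⟩ fun i => h (w i))

/-- Number of SAWs of length `n` starting at `v`. -/
noncomputable def sawCount (G : SimpleGraph V) (n : ℕ) (v : V) : ℕ :=
  Nat.card {w : ℕ → V // IsSAWFrom G n v w}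

/-- Number of bridges of length `n` starting at `v`. -/
noncomputable def bridgeCount (G : SimpleGraph V) (h : V → ℤ) (n : ℕ) (v : V) : ℕ :=
  Nat.card {w : ℕ → V // IsBridgeFrom G h n v w}

/-- Number of reversed bridges of length `n` starting at `v`. -/
noncomputable def rbridgeCount (G : SimpleGraph V) (h : V → ℤ) (n : ℕ) (v : V) : ℕ :=
  Nat.card {w : ℕ → V // IsRBridgeFrom G h n v w}

/-- Number of half-space walks of length `n` starting at `v`. -/
noncomputable def hswCount (G : SimpleGraph V) (h : V → ℤ) (n : ℕ) (v : V) : ℕ :=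
  Nat.card {w : ℕ → V // IsHSWFrom G h n v w}

/-- Number of bridges of length `n` and span `a` starting at `v`. -/
noncomputable def bridgeSpanCount (G : SimpleGraph V) (h : V → ℤ) (n : ℕ) (v : V) (a : ℤ) : ℕ :=
  Nat.card {w : ℕ → V // IsBridgeFrom G h n v w ∧ walkSpan h n w = a}

/-- Number of reversed bridges of length `n` and span `a` starting at `v`. -/
noncomputable def rbridgeSpanCount (G : SimpleGraph V) (h : V → ℤ) (n : ℕ) (v : V) (a : ℤ) : ℕ :=
  Nat.card {w : ℕ → V // IsRBridgeFrom G h n v w ∧ walkSpan h n w = a}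

/-- `c_n`: maximal number of SAWs of length `n` over all starting vertices. -/
noncomputable def sawSup (G : SimpleGraph V) (n : ℕ) : ℕ :=
  sSup {m | ∃ v : V, m = sawCount G n v}

/-- `b_n`: minimal number of bridges of length `n` over all starting vertices. -/
noncomputable def bridgeInf (G : SimpleGraph V) (h : V → ℤ) (n : ℕ) : ℕ :=
  sInf {m | ∃ v : V, m = bridgeCount G h n v}

/-- `b̄_n`: minimal number of reversed bridges of length `n` over all starting vertices. -/
noncomputable def rbridgeInf (G : SimpleGraph V) (h : V → ℤ) (n : ℕ) : ℕ :=
  sInf {m | ∃ v : V, m = rbridgeCount G h n v}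

/-- `idx` together with the spans `a` form the canonical decomposition of the walk `w`
of length `n` into an alternating sequence of `k` bridges and reversed bridges. -/
noncomputable def IsCanonicalDecomp (h : V → ℤ) (n : ℕ) (w : ℕ → V) (k : ℕ) (a : ℕ → ℤ)
    (idx : ℕ → ℕ) : Prop :=
  idx 0 = 0 ∧ idx k = n ∧
  ∀ j, 1 ≤ j → j ≤ k →
    idx (j - 1) < idx j ∧ idx j ≤ n ∧
    a j = |h (w (idx j)) - h (w (idx (j - 1)))| ∧
    (∀ i, idx (j - 1) ≤ i → i ≤ n → |h (w i) - h (w (idx (j - 1)))| ≤ a j) ∧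
    (∀ i, idx j < i → i ≤ n → |h (w i) - h (w (idx (j - 1)))| < a j)

/-- `h_{n,v}(a_1,…,a_k)`: number of half-space walks of length `n` from `v` whose
canonical decomposition has span sequence `a 1, …, a k`. -/
noncomputable def hswSeqCount (G : SimpleGraph V) (h : V → ℤ) (n : ℕ) (v : V) (k : ℕ)
    (a : ℕ → ℤ) : ℕ :=
  Nat.card {w : ℕ → V // IsHSWFrom G h n v w ∧ ∃ idx : ℕ → ℕ,
    IsCanonicalDecomp h n w k a idx}

/-- The group `Γ` acts quasi-transitively. -/
noncomputable def QuasiTransitiveSub (G : SimpleGraph V) (Γ : Subgroup (G ≃g G)) : Prop :=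
  ∃ S : Finset V, ∀ v : V, ∃ γ ∈ Γ, ∃ s ∈ S, γ s = v

/-- The graph `G` is quasi-transitive. -/
noncomputable def QuasiTransitive (G : SimpleGraph V) : Prop :=
  ∃ S : Finset V, ∀ v : V, ∃ γ : G ≃g G, ∃ s ∈ S, γ s = v

/-- `(h, Γ)` is a graph height function on `G`. -/
noncomputable def IsGraphHeightFunction (G : SimpleGraph V) (h : V → ℤ) (Γ : Subgroup (G ≃g G)) : Prop :=
  QuasiTransitiveSub G Γ ∧
  (∀ γ ∈ Γ, ∀ u v : V, h (γ v) - h (γ u) = h v - h u) ∧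
  (∀ v : V, ∃ u w : V, G.Adj v u ∧ G.Adj v w ∧ h u < h v ∧ h v < h w)

/-- `P_D A`: number of partitions of `A` into distinct parts. -/
noncomputable def distinctPartitionCount (A : ℕ) : ℕ := (Nat.Partition.distincts A).card

noncomputable def bridgeBeta (G : SimpleGraph V) (h : V → ℤ) : ℝ :=
  Filter.limsup (fun n : ℕ => (bridgeInf G h n : ℝ) ^ (1 / (n : ℝ))) atTop

noncomputable def rbridgeBeta (G : SimpleGraph V) (h : V → ℤ) : ℝ :=
  Filter.limsup (fun n : ℕ => (rbridgeInf G h n : ℝ) ^ (1 / (n : ℝ))) atTop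

noncomputable def betaMax (G : SimpleGraph V) (h : V → ℤ) : ℝ :=
  max (bridgeBeta G h) (rbridgeBeta G h)

/-! ### Auxiliary machinery for Statement 4 -/

section Aux

variable {G : SimpleGraph V} {h : V → ℤ}

lemma isWalkFrom_finite (hlf : ∀ v : V, (G.neighborSet v).Finite) (n : ℕ) (v : V) :
    Finite {w : ℕ → V // IsWalkFrom G n v w} := by
  induction n with
  | zero =>
    refine Finite.of_injective (fun _ => ()) ?_
    rintro ⟨w, e1, -, p1⟩ ⟨w', e2, -, p2⟩ -
    refine Subtype.ext (funext fun i => ?_)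
    show w i = w' i
    rw [p1 i (Nat.zero_le i), p2 i (Nat.zero_le i), e1, e2]
  | succ n ih =>
    haveI := ih
    haveI : ∀ w' : {w : ℕ → V // IsWalkFrom G n v w}, Finite {u : V // G.Adj (w'.1 n) u} :=
      fun w' => (hlf (w'.1 n)).to_subtype
    refine Finite.of_injective
      (fun w : {w : ℕ → V // IsWalkFrom G (n + 1) v w} =>
        (⟨⟨fun i => w.1 (min i n), ?_⟩, ⟨w.1 (n + 1), ?_⟩⟩ :
          Σ w' : {w : ℕ → V // IsWalkFrom G n v w}, {u : V // G.Adj (w'.1 n) u})) ?_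
    · obtain ⟨e, adj, pin⟩ := w.2
      refine ⟨by simpa using e, fun i hi => ?_, fun i hi => by simp [min_eq_right hi, min_eq_right (le_refl n)]⟩
      show G.Adj (w.1 (min i n)) (w.1 (min (i + 1) n))
      rw [min_eq_left hi.le, min_eq_left hi]
      exact adj i (by omega)
    · have := w.2.2.1 n (by omega)
      simpa [min_eq_left (le_refl n)] using this
    · intro w w' hww'
      have h1 : ∀ i, w.1 (min i n) = w'.1 (min i n) := by
        intro i
        exact congrFun (congrArg (fun p : (Σ w' : {w : ℕ → V // IsWalkFrom G n v w},
          {u : V // G.Adj (w'.1 n) u}) => (p.1.1 : ℕ → V)) hww') i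
      have h2 : w.1 (n + 1) = w'.1 (n + 1) :=
        congrArg (fun p : (Σ w' : {w : ℕ → V // IsWalkFrom G n v w},
          {u : V // G.Adj (w'.1 n) u}) => (p.2 : V)) hww'
      refine Subtype.ext (funext fun i => ?_)
      rcases le_or_gt i n with hi | hi
      · have := h1 i
        rwa [min_eq_left hi] at this
      · rw [w.2.2.2 i hi, w'.2.2.2 i hi]
        exact h2

lemma finite_of_walk (hlf : ∀ v : V, (G.neighborSet v).Finite) {n : ℕ} {v : V}
    (P : (ℕ → V) → Prop) (hP : ∀ w, P w → IsWalkFrom G n v w) :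
    Finite {w : ℕ → V // P w} := by
  haveI := isWalkFrom_finite hlf n v
  exact Finite.of_injective
    (fun w : {w : ℕ → V // P w} => (⟨w.1, hP w.1 w.2⟩ : {w : ℕ → V // IsWalkFrom G n v w}))
    fun w w' hh => Subtype.ext (by simpa [Subtype.ext_iff] using hh)

lemma walkSpan_eq_of (h : V → ℤ) {n : ℕ} (w : ℕ → V) {top bot : ℕ}
    (htop : top ≤ n) (hbot : bot ≤ n)
    (h1 : ∀ i, i ≤ n → h (w i) ≤ h (w top)) (h2 : ∀ i, i ≤ n → h (w bot) ≤ h (w i)) :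
    walkSpan h n w = h (w top) - h (w bot) := by
  unfold walkSpan
  congr 1
  · apply le_antisymm
    · exact Finset.sup'_le _ _ fun i hi =>
        h1 i (by simpa [Nat.lt_succ_iff] using Finset.mem_range.mp hi)
    · exact Finset.le_sup' (fun i => h (w i)) (Finset.mem_range.mpr (Nat.lt_succ_of_le htop))
  · apply le_antisymm
    · exact Finset.inf'_le (fun i => h (w i)) (Finset.mem_range.mpr (Nat.lt_succ_of_le hbot))
    · exact Finset.le_inf' _ _ fun i hi =>
        h2 i (by simpa [Nat.lt_succ_iff] using Finset.mem_range.mp hi)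

lemma isBridgeFrom_span {G : SimpleGraph V} {h : V → ℤ} {n : ℕ} {v : V} {w : ℕ → V}
    (hw : IsBridgeFrom G h n v w) : walkSpan h n w = h (w n) - h (w 0) := by
  refine walkSpan_eq_of h w le_rfl (Nat.zero_le n) (fun i hi => ?_) (fun i hi => ?_)
  · rcases Nat.eq_zero_or_pos i with rfl | hpos
    · rcases Nat.eq_zero_or_pos n with rfl | hn
      · exact le_rfl
      · exact (hw.2 n hn le_rfl).1.le
    · exact (hw.2 i hpos hi).2
  · rcases Nat.eq_zero_or_pos i with rfl | hpos
    · exact le_rfl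
    · exact (hw.2 i hpos hi).1.le

lemma isRBridgeFrom_neg {G : SimpleGraph V} {h : V → ℤ} {n : ℕ} {v : V} {w : ℕ → V} :
    IsRBridgeFrom G h n v w ↔ IsBridgeFrom G (fun x => -h x) n v w := by
  unfold IsRBridgeFrom IsBridgeFrom
  constructor
  · rintro ⟨hs, hb⟩
    refine ⟨hs, fun i h1 h2 => ?_⟩
    have h3 : h (w 0) > h (w i) ∧ h (w i) ≥ h (w n) := hb i h1 h2
    show -h (w 0) < -h (w i) ∧ -h (w i) ≤ -h (w n)
    exact ⟨by omega, by omega⟩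
  · rintro ⟨hs, hb⟩
    refine ⟨hs, fun i h1 h2 => ?_⟩
    have h3 : -h (w 0) < -h (w i) ∧ -h (w i) ≤ -h (w n) := hb i h1 h2
    exact ⟨by omega, by omega⟩

lemma isBridgeFrom_neg {G : SimpleGraph V} {h : V → ℤ} {n : ℕ} {v : V} {w : ℕ → V} :
    IsBridgeFrom G h n v w ↔ IsRBridgeFrom G (fun x => -h x) n v w := by
  unfold IsRBridgeFrom IsBridgeFrom
  constructor
  · rintro ⟨hs, hb⟩
    refine ⟨hs, fun i h1 h2 => ?_⟩
    have h3 : h (w 0) < h (w i) ∧ h (w i) ≤ h (w n) := hb i h1 h2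
    show -h (w 0) > -h (w i) ∧ -h (w i) ≥ -h (w n)
    exact ⟨by omega, by omega⟩
  · rintro ⟨hs, hb⟩
    refine ⟨hs, fun i h1 h2 => ?_⟩
    have h3 : -h (w 0) > -h (w i) ∧ -h (w i) ≥ -h (w n) := hb i h1 h2
    exact ⟨by omega, by omega⟩

lemma walkSpan_neg {h : V → ℤ} {n : ℕ} {w : ℕ → V} :
    walkSpan (fun x => -h x) n w = walkSpan h n w := by
  unfold walkSpan
  have hne : (Finset.range (n + 1)).Nonempty := ⟨0, by simp⟩
  have e1 : ((Finset.range (n + 1)).sup' hne fun i => -h (w i)) =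
      -((Finset.range (n + 1)).inf' hne fun i => h (w i)) := by
    apply le_antisymm
    · exact Finset.sup'_le _ _ fun i hi => neg_le_neg (Finset.inf'_le _ hi)
    · exact neg_le.mpr (Finset.le_inf' _ _ fun i hi => neg_le.mp (Finset.le_sup' (fun i => -h (w i)) hi))
  have e2 : ((Finset.range (n + 1)).inf' hne fun i => -h (w i)) =
      -((Finset.range (n + 1)).sup' hne fun i => h (w i)) := by
    apply le_antisymm
    · exact le_neg.mpr (Finset.sup'_le _ _ fun i hi => le_neg.mpr (Finset.inf'_le (fun i => -h (w i)) hi))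
    · exact Finset.le_inf' _ _ fun i hi => neg_le_neg (Finset.le_sup' (fun i => h (w i)) hi)
  rw [e1, e2]
  ring

lemma isCanonicalDecomp_neg {h : V → ℤ} {n : ℕ} {w : ℕ → V} {k : ℕ} {a : ℕ → ℤ} {idx : ℕ → ℕ} :
    IsCanonicalDecomp (fun x => -h x) n w k a idx ↔ IsCanonicalDecomp h n w k a idx := by
  have e : ∀ x y : V, |(-h x) - (-h y)| = |h x - h y| := fun x y => by
    rw [show (-h x) - (-h y) = -(h x - h y) by ring, abs_neg]
  unfold IsCanonicalDecomp
  simp only [e]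

lemma isGraphHeightFunction_neg {G : SimpleGraph V} {h : V → ℤ} {Γ : Subgroup (G ≃g G)}
    (hg : IsGraphHeightFunction G h Γ) : IsGraphHeightFunction G (fun x => -h x) Γ := by
  obtain ⟨hq, hd, hs⟩ := hg
  refine ⟨hq, fun γ hγ u v => ?_, fun v => ?_⟩
  · show -h (γ v) - -h (γ u) = -h v - -h u
    have := hd γ hγ u v; omega
  · obtain ⟨u, w, hu, hw, h1, h2⟩ := hs v
    refine ⟨w, u, hw, hu, ?_, ?_⟩
    · show -h w < -h v; omega
    · show -h v < -h u; omega

lemma rbridgeSpanCount_eq_neg (G : SimpleGraph V) (h : V → ℤ) (n : ℕ) (v : V) (A : ℤ) :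
    rbridgeSpanCount G h n v A = bridgeSpanCount G (fun x => -h x) n v A :=
  Nat.card_congr (Equiv.subtypeEquivRight fun w =>
    and_congr isRBridgeFrom_neg (by rw [walkSpan_neg]))

lemma bridgeSpanCount_eq_neg (G : SimpleGraph V) (h : V → ℤ) (n : ℕ) (v : V) (A : ℤ) :
    bridgeSpanCount G h n v A = rbridgeSpanCount G (fun x => -h x) n v A :=
  Nat.card_congr (Equiv.subtypeEquivRight fun w =>
    and_congr isBridgeFrom_neg (by rw [walkSpan_neg]))

lemma walkSpan_const (h : V → ℤ) (w : ℕ → V) : walkSpan h 0 w = 0 := by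
  have := walkSpan_eq_of h (n := 0) w (top := 0) (bot := 0) le_rfl le_rfl
    (fun i hi => by rw [Nat.le_zero.mp hi]) (fun i hi => by rw [Nat.le_zero.mp hi])
  simpa using this

lemma rbridgeSpanCount_zero (G : SimpleGraph V) (h : V → ℤ) (v : V) :
    rbridgeSpanCount G h 0 v 0 = 1 := by
  unfold rbridgeSpanCount
  rw [Nat.card_eq_one_iff_unique]
  constructor
  · constructor
    rintro ⟨w, ⟨⟨⟨e, -, pin⟩, -⟩, -⟩, -⟩ ⟨w', ⟨⟨⟨e', -, pin'⟩, -⟩, -⟩, -⟩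
    refine Subtype.ext (funext fun i => ?_)
    show w i = w' i
    rw [pin i (Nat.zero_le i), pin' i (Nat.zero_le i), e, e']
  · refine ⟨⟨fun _ => v, ⟨⟨⟨rfl, fun i hi => absurd hi (by omega), fun _ _ => rfl⟩,
      fun x hx y hy _ => ?_⟩, fun i h1 h2 => absurd (h1.trans h2) (by omega)⟩,
      walkSpan_const h _⟩⟩
    have hx0 : x = 0 := Nat.le_zero.mp hx
    have hy0 : y = 0 := Nat.le_zero.mp hy
    rw [hx0, hy0]

/-- Counting helper: an injection from a type into a sigma of products bounds its card by a sum. -/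
lemma card_le_sum_of_sigma_inj {N : ℕ} (A B : ℕ → Type*) (C : Type*)
    [∀ m, Finite (A m)] [∀ m, Finite (B m)]
    (f : C → Σ m : Fin (N + 1), A m × B m) (hf : Function.Injective f) :
    Nat.card C ≤ ∑ m ∈ Finset.range (N + 1), Nat.card (A m) * Nat.card (B m) := by
  classical
  haveI : ∀ m : ℕ, Fintype (A m) := fun m => Fintype.ofFinite _
  haveI : ∀ m : ℕ, Fintype (B m) := fun m => Fintype.ofFinite _
  calc Nat.card C ≤ Nat.card (Σ m : Fin (N + 1), A (m : ℕ) × B (m : ℕ)) :=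
        Nat.card_le_card_of_injective f hf
    _ = ∑ m ∈ Finset.range (N + 1), Nat.card (A m) * Nat.card (B m) := by
        rw [Nat.card_eq_fintype_card, Fintype.card_sigma, ← Fin.sum_univ_eq_sum_range]
        refine Finset.sum_congr rfl fun m _ => ?_
        rw [Fintype.card_prod, Nat.card_eq_fintype_card, Nat.card_eq_fintype_card]

/-- Counting helper: an injection from a sigma of products bounds the sum by the target card. -/
lemma sum_card_le_of_sigma_inj {N : ℕ} (A B : ℕ → Type*) (C : Type*) [Finite C]
    [∀ m, Finite (A m)] [∀ m, Finite (B m)]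
    (f : (Σ m : Fin (N + 1), A m × B m) → C) (hf : Function.Injective f) :
    ∑ m ∈ Finset.range (N + 1), Nat.card (A m) * Nat.card (B m) ≤ Nat.card C := by
  classical
  haveI : ∀ m : ℕ, Fintype (A m) := fun m => Fintype.ofFinite _
  haveI : ∀ m : ℕ, Fintype (B m) := fun m => Fintype.ofFinite _
  calc ∑ m ∈ Finset.range (N + 1), Nat.card (A m) * Nat.card (B m)
      = Nat.card (Σ m : Fin (N + 1), A (m : ℕ) × B (m : ℕ)) := by
        rw [Nat.card_eq_fintype_card, Fintype.card_sigma, ← Fin.sum_univ_eq_sum_range]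
        refine (Finset.sum_congr rfl fun m _ => ?_).symm
        rw [Fintype.card_prod, Nat.card_eq_fintype_card, Nat.card_eq_fintype_card]
    _ ≤ Nat.card C := Nat.card_le_card_of_injective f hf

/-- A canonical choice of an automorphism in `Γ` carrying `u` to `u'`. -/
noncomputable def pickAuto {G : SimpleGraph V} {Γ : Subgroup (G ≃g G)}
    (htrans : ∀ u v : V, ∃ γ ∈ Γ, γ u = v) (u u' : V) : G ≃g G :=
  (htrans u u').choose

lemma pickAuto_mem {G : SimpleGraph V} {Γ : Subgroup (G ≃g G)}
    (htrans : ∀ u v : V, ∃ γ ∈ Γ, γ u = v) (u u' : V) : pickAuto htrans u u' ∈ Γ :=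
  (htrans u u').choose_spec.1

lemma pickAuto_apply {G : SimpleGraph V} {Γ : Subgroup (G ≃g G)}
    (htrans : ∀ u v : V, ∃ γ ∈ Γ, γ u = v) (u u' : V) : pickAuto htrans u u' u = u' :=
  (htrans u u').choose_spec.2

lemma pickAuto_h {G : SimpleGraph V} {h : V → ℤ} {Γ : Subgroup (G ≃g G)}
    (hghf : IsGraphHeightFunction G h Γ) (htrans : ∀ u v : V, ∃ γ ∈ Γ, γ u = v)
    (u u' x : V) : h (pickAuto htrans u u' x) = h x - h u + h u' := by
  have := hghf.2.1 _ (pickAuto_mem htrans u u') u x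
  rw [pickAuto_apply] at this
  omega

/-- Gluing two walks, translating the second one by `γ`. -/
noncomputable def glue {G : SimpleGraph V} (γ : G ≃g G) (w1 : ℕ → V) (m : ℕ) (w2 : ℕ → V) :
    ℕ → V :=
  fun i => if i ≤ m then w1 i else γ (w2 (i - m))

lemma isBridgeFrom_facts {G : SimpleGraph V} {h : V → ℤ} {n : ℕ} {v : V} {w : ℕ → V} {A : ℤ}
    (hw : IsBridgeFrom G h n v w) (hsp : walkSpan h n w = A) (hA : 0 ≤ A) :
    w 0 = v ∧ h (w n) = h v + A ∧ (∀ i, i ≤ n → h (w i) ≤ h v + A) ∧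
      (∀ i, 1 ≤ i → i ≤ n → h v < h (w i)) := by
  have e0 : w 0 = v := hw.1.1.1
  have esp := isBridgeFrom_span hw
  rw [hsp, e0] at esp
  refine ⟨e0, by omega, fun i hi => ?_, fun i hi1 hi2 => e0 ▸ (hw.2 i hi1 hi2).1⟩
  rcases Nat.eq_zero_or_pos i with rfl | hpos
  · rw [e0]; omega
  · have := (hw.2 i hpos hi).2
    omega

lemma glue_bridge {G : SimpleGraph V} {h : V → ℤ} {Γ : Subgroup (G ≃g G)}
    (hghf : IsGraphHeightFunction G h Γ) (htrans : ∀ u v : V, ∃ γ ∈ Γ, γ u = v)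
    {v : V} {m M : ℕ} (hmM : m ≤ M) {w1 w2 : ℕ → V} {s1 s2 : ℤ}
    (hs1 : 0 < s1) (hs2 : 0 ≤ s2)
    (h1 : IsBridgeFrom G h m v w1) (hsp1 : walkSpan h m w1 = s1)
    (h2 : IsBridgeFrom G h (M - m) v w2) (hsp2 : walkSpan h (M - m) w2 = s2) :
    IsBridgeFrom G h M v (glue (pickAuto htrans v (w1 m)) w1 m w2) ∧
      walkSpan h M (glue (pickAuto htrans v (w1 m)) w1 m w2) = s1 + s2 ∧
      (∀ i, i ≤ m → glue (pickAuto htrans v (w1 m)) w1 m w2 i = w1 i) ∧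
      (∀ i, m ≤ i → glue (pickAuto htrans v (w1 m)) w1 m w2 i
          = pickAuto htrans v (w1 m) (w2 (i - m))) ∧
      (∀ i, i ≤ M → (h (glue (pickAuto htrans v (w1 m)) w1 m w2 i) ≤ h v + s1 ↔ i ≤ m)) := by
  set γ := pickAuto htrans v (w1 m) with hγdef
  set W := glue γ w1 m w2 with hWdef
  obtain ⟨e1, f1top, f1le, f1gt⟩ := isBridgeFrom_facts h1 hsp1 hs1.le
  obtain ⟨e2, f2top, f2le, f2gt⟩ := isBridgeFrom_facts h2 hsp2 hs2
  have hγx : ∀ x, h (γ x) = h x + s1 := fun x => by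
    rw [hγdef, pickAuto_h hghf htrans]; omega
  have hγv : γ v = w1 m := pickAuto_apply htrans v (w1 m)
  have Wleft : ∀ i, i ≤ m → W i = w1 i := fun i hi => if_pos hi
  have Wright : ∀ i, m ≤ i → W i = γ (w2 (i - m)) := by
    intro i hi
    rcases eq_or_lt_of_le hi with heq | hlt
    · rw [← heq, Nat.sub_self, e2, hγv]
      exact Wleft m le_rfl
    · exact if_neg (by omega)
  have hWM : h (W M) = h v + (s1 + s2) := by
    rw [Wright M hmM, hγx]; omega
  have hWle : ∀ i, i ≤ M → h (W i) ≤ h v + (s1 + s2) := by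
    intro i hi
    rcases le_or_gt i m with him | him
    · rw [Wleft i him]; have := f1le i him; omega
    · rw [Wright i him.le, hγx]
      have := f2le (i - m) (by omega); omega
  have hPos : ∀ i, 1 ≤ i → i ≤ M → h v < h (W i) := by
    intro i hi1 hi2
    rcases le_or_gt i m with him | him
    · rw [Wleft i him]; exact f1gt i hi1 him
    · rw [Wright i him.le, hγx]
      have := f2gt (i - m) (by omega) (by omega); omega
  have char : ∀ i, i ≤ M → (h (W i) ≤ h v + s1 ↔ i ≤ m) := by
    intro i hi
    constructor
    · intro hh
      by_contra him
      push_neg at him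
      rw [Wright i him.le, hγx] at hh
      have := f2gt (i - m) (by omega) (by omega)
      omega
    · intro him
      rw [Wleft i him]; exact f1le i him
  have hW0 : W 0 = v := by rw [Wleft 0 (Nat.zero_le m), e1]
  have hbridge : IsBridgeFrom G h M v W := by
    refine ⟨⟨⟨hW0, ?_, ?_⟩, ?_⟩, ?_⟩
    · -- adjacency
      intro i hi
      rcases lt_or_ge i m with him | him
      · rw [Wleft i him.le, Wleft (i + 1) him]
        exact h1.1.1.2.1 i (by omega)
      · rw [Wright i him, Wright (i + 1) (by omega)]
        have hadj := h2.1.1.2.1 (i - m) (by omega)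
        have : i + 1 - m = (i - m) + 1 := by omega
        rw [this]
        exact (pickAuto htrans v (w1 m)).map_rel_iff.mpr hadj
    · -- pinned
      intro i hi
      rw [Wright i (hmM.trans hi), Wright M hmM,
        h2.1.1.2.2 (i - m) (by omega)]
    · -- self-avoiding
      intro x hx y hy hxy
      simp only [Set.mem_Iic] at hx hy
      rcases le_or_gt x m with hxm | hxm <;> rcases le_or_gt y m with hym | hym
      · exact h1.1.2 (Set.mem_Iic.mpr hxm) (Set.mem_Iic.mpr hym)
          (by rwa [← Wleft x hxm, ← Wleft y hym])
      · exfalso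
        have hhx : h (W x) ≤ h v + s1 := (char x hx).mpr hxm
        have hhy : ¬ h (W y) ≤ h v + s1 := by
          rw [char y hy]; omega
        exact hhy (hxy ▸ hhx)
      · exfalso
        have hhy : h (W y) ≤ h v + s1 := (char y hy).mpr hym
        have hhx : ¬ h (W x) ≤ h v + s1 := by
          rw [char x hx]; omega
        exact hhx (hxy ▸ hhy)
      · have := hxy
        rw [Wright x hxm.le, Wright y hym.le] at this
        have h22 := h2.1.2 (Set.mem_Iic.mpr (show x - m ≤ M - m by omega))
          (Set.mem_Iic.mpr (show y - m ≤ M - m by omega))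
          ((pickAuto htrans v (w1 m)).injective this)
        omega
    · -- bridge inequalities
      intro i hi1 hi2
      rw [hW0]
      exact ⟨hPos i hi1 hi2, by rw [hWM] at *; exact hWle i hi2⟩
  have hspan : walkSpan h M W = s1 + s2 := by
    have := walkSpan_eq_of h W (top := M) (bot := 0) le_rfl (Nat.zero_le M)
      (fun i hi => by rw [hWM]; exact hWle i hi)
      (fun i hi => by
        rw [hW0]
        rcases Nat.eq_zero_or_pos i with rfl | hpos
        · rw [hW0]
        · exact (hPos i hpos hi).le)
    rw [this, hWM, hW0]; omega
  exact ⟨hbridge, hspan, Wleft, Wright, char⟩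

lemma bridge_merge (G : SimpleGraph V) (hlf : ∀ v : V, (G.neighborSet v).Finite)
    {h : V → ℤ} {Γ : Subgroup (G ≃g G)} (hghf : IsGraphHeightFunction G h Γ)
    (htrans : ∀ u v : V, ∃ γ ∈ Γ, γ u = v)
    (M : ℕ) (v : V) (s1 s2 : ℤ) (hs1 : 0 < s1) (hs2 : 0 ≤ s2) :
    ∑ m ∈ Finset.range (M + 1),
      bridgeSpanCount G h m v s1 * bridgeSpanCount G h (M - m) v s2 ≤
      bridgeSpanCount G h M v (s1 + s2) := by
  classical
  set A := fun m : ℕ => {w : ℕ → V // IsBridgeFrom G h m v w ∧ walkSpan h m w = s1} with hA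
  set B := fun m : ℕ =>
    {w : ℕ → V // IsBridgeFrom G h (M - m) v w ∧ walkSpan h (M - m) w = s2} with hB
  haveI : ∀ m, Finite (A m) := fun m => finite_of_walk hlf _ (fun w hw => hw.1.1.1)
  haveI : ∀ m, Finite (B m) := fun m => finite_of_walk hlf _ (fun w hw => hw.1.1.1)
  haveI : Finite {w : ℕ → V // IsBridgeFrom G h M v w ∧ walkSpan h M w = s1 + s2} :=
    finite_of_walk hlf _ (fun w hw => hw.1.1.1)
  have key : ∀ (m : Fin (M + 1)) (p : A (m : ℕ) × B (m : ℕ)),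
      IsBridgeFrom G h M v
          (glue (pickAuto htrans v (p.1.1 m)) p.1.1 m p.2.1) ∧
        walkSpan h M (glue (pickAuto htrans v (p.1.1 m)) p.1.1 m p.2.1) = s1 + s2 := by
    intro m p
    have hg := glue_bridge hghf htrans (v := v) (m := (m : ℕ)) (M := M)
      (Nat.lt_succ_iff.mp m.2) hs1 hs2 p.1.2.1 p.1.2.2 p.2.2.1 p.2.2.2
    exact ⟨hg.1, hg.2.1⟩
  refine le_trans (le_of_eq ?_)
    (sum_card_le_of_sigma_inj A B
      {w : ℕ → V // IsBridgeFrom G h M v w ∧ walkSpan h M w = s1 + s2}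
      (fun p => ⟨glue (pickAuto htrans v (p.2.1.1 p.1)) p.2.1.1 p.1 p.2.2.1,
        key p.1 p.2⟩) ?_)
  · rfl
  · -- injectivity
    rintro ⟨m, p⟩ ⟨m', p'⟩ hpq
    have hW : glue (pickAuto htrans v (p.1.1 m)) p.1.1 m p.2.1
        = glue (pickAuto htrans v (p'.1.1 m')) p'.1.1 m' p'.2.1 :=
      congrArg Subtype.val hpq
    have hg := glue_bridge hghf htrans (v := v) (m := (m : ℕ)) (M := M)
      (Nat.lt_succ_iff.mp m.2) hs1 hs2 p.1.2.1 p.1.2.2 p.2.2.1 p.2.2.2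
    have hg' := glue_bridge hghf htrans (v := v) (m := (m' : ℕ)) (M := M)
      (Nat.lt_succ_iff.mp m'.2) hs1 hs2 p'.1.2.1 p'.1.2.2 p'.2.2.1 p'.2.2.2
    obtain ⟨-, -, Wl, Wr, Wc⟩ := hg
    obtain ⟨-, -, Wl', Wr', Wc'⟩ := hg'
    have hmm : (m : ℕ) = (m' : ℕ) := by
      by_contra hne
      rcases Nat.lt_or_ge (m : ℕ) (m' : ℕ) with hlt | hge
      · have c1 := (Wc' (m' : ℕ) (Nat.lt_succ_iff.mp m'.2)).mpr le_rfl
        have c2 := (Wc (m' : ℕ) (Nat.lt_succ_iff.mp m'.2))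
        rw [hW] at c2
        have := c2.mp c1
        omega
      · have hlt :  (m' : ℕ) < (m : ℕ) := by omega
        have c1 := (Wc (m : ℕ) (Nat.lt_succ_iff.mp m.2)).mpr le_rfl
        have c2 := (Wc' (m : ℕ) (Nat.lt_succ_iff.mp m.2))
        rw [← hW] at c2
        have := c2.mp c1
        omega
    have hmfin : m = m' := Fin.ext hmm
    subst hmfin
    have hw1 : p.1.1 = p'.1.1 := by
      funext i
      rcases le_or_gt i (m : ℕ) with him | him
      · rw [← Wl i him, ← Wl' i him, hW]
      · rw [p.1.2.1.1.1.2.2 i him.le, p'.1.2.1.1.1.2.2 i him.le]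
        rw [← Wl (m : ℕ) le_rfl, ← Wl' (m : ℕ) le_rfl, hW]
    have hend : p.1.1 (m : ℕ) = p'.1.1 (m : ℕ) := by rw [hw1]
    have hw2 : p.2.1 = p'.2.1 := by
      funext i
      have e1 := Wr ((m : ℕ) + i) (Nat.le_add_right _ _)
      have e2 := Wr' ((m : ℕ) + i) (Nat.le_add_right _ _)
      rw [Nat.add_sub_cancel_left] at e1 e2
      rw [hW] at e1
      rw [e2] at e1
      rw [hend] at e1
      exact (pickAuto htrans v (p'.1.1 (m : ℕ))).injective e1.symm
    refine congrArg (Sigma.mk m) ?_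
    exact Prod.ext (Subtype.ext hw1) (Subtype.ext hw2)

lemma hsw_decomp_step {G : SimpleGraph V} {h : V → ℤ} {Γ : Subgroup (G ≃g G)}
    (hghf : IsGraphHeightFunction G h Γ) (htrans : ∀ u v : V, ∃ γ ∈ Γ, γ u = v)
    {n : ℕ} {v : V} {k : ℕ} (hk : 1 ≤ k) {a : ℕ → ℤ} {w : ℕ → V}
    (hhsw : IsHSWFrom G h n v w) {idx : ℕ → ℕ}
    (hidx : IsCanonicalDecomp h n w k a idx) :
    1 ≤ idx 1 ∧ idx 1 ≤ n ∧
    (IsBridgeFrom G h (idx 1) v (fun i => w (min i (idx 1))) ∧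
      walkSpan h (idx 1) (fun i => w (min i (idx 1))) = a 1) ∧
    IsHSWFrom G (fun x => -h x) (n - idx 1) v
      (fun i => pickAuto htrans (w (idx 1)) v (w (min (idx 1 + i) n))) ∧
    IsCanonicalDecomp (fun x => -h x) (n - idx 1)
      (fun i => pickAuto htrans (w (idx 1)) v (w (min (idx 1 + i) n))) (k - 1)
      (fun j => a (j + 1)) (fun j => idx (j + 1) - idx 1) := by
  obtain ⟨⟨⟨e0, adjw, pinw⟩, injw⟩, hpos⟩ := hhsw
  obtain ⟨d0, dk, dcond⟩ := hidx
  have hc1 := dcond 1 le_rfl hk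
  have e10 : (1 : ℕ) - 1 = 0 := rfl
  rw [e10, d0] at hc1
  obtain ⟨hm1', hmn, ha1, hle1, hlt1⟩ := hc1
  set m := idx 1 with hmdef
  set γ := pickAuto htrans (w m) v with hγdef
  set w1 : ℕ → V := fun i => w (min i m) with hw1def
  set w2 : ℕ → V := fun i => γ (w (min (m + i) n)) with hw2def
  have hm1 : 1 ≤ m := by omega
  have hposm : h v < h (w m) := by
    have := hpos m hm1 hmn
    rwa [e0] at this
  have ha1' : a 1 = h (w m) - h v := by
    rw [ha1, e0]
    exact abs_of_pos (by omega)
  have hle1' : ∀ i, i ≤ n → h (w i) ≤ h v + a 1 := by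
    intro i hi
    have := (abs_le.mp (hle1 i (Nat.zero_le i) hi)).2
    rw [e0] at this; omega
  have hlt1' : ∀ i, m < i → i ≤ n → h (w i) < h (w m) := by
    intro i him hin
    have := (abs_lt.mp (hlt1 i him hin)).2
    rw [e0] at this; omega
  have hγh : ∀ x, h (γ x) = h x - h (w m) + h v := fun x => pickAuto_h hghf htrans _ _ x
  have hγm : γ (w m) = v := pickAuto_apply htrans _ _
  -- the first piece is a bridge of span `a 1`
  have hbridge : IsBridgeFrom G h m v w1 := by
    refine ⟨⟨⟨?_, ?_, ?_⟩, ?_⟩, ?_⟩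
    · show w (min 0 m) = v
      rw [Nat.zero_min, e0]
    · intro i hi
      show G.Adj (w (min i m)) (w (min (i + 1) m))
      rw [min_eq_left hi.le, min_eq_left hi]
      exact adjw i (by omega)
    · intro i hi
      show w (min i m) = w (min m m)
      rw [min_eq_right hi, min_self]
    · intro x hx y hy hxy
      simp only [Set.mem_Iic] at hx hy
      have : w (min x m) = w (min y m) := hxy
      rw [min_eq_left hx, min_eq_left hy] at this
      exact injw (Set.mem_Iic.mpr (hx.trans hmn)) (Set.mem_Iic.mpr (hy.trans hmn)) this
    · intro i hi1 hi2
      show h (w (min 0 m)) < h (w (min i m)) ∧ h (w (min i m)) ≤ h (w (min m m))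
      rw [Nat.zero_min, e0, min_eq_left hi2, min_self]
      refine ⟨by rw [← e0]; exact hpos i hi1 (hi2.trans hmn), ?_⟩
      have := hle1' i (hi2.trans hmn)
      omega
  have hspan1 : walkSpan h m w1 = a 1 := by
    have := walkSpan_eq_of h w1 (top := m) (bot := 0) le_rfl (Nat.zero_le m)
      (fun i hi => ?_) (fun i hi => ?_)
    · rw [this]
      show h (w (min m m)) - h (w (min 0 m)) = a 1
      rw [min_self, Nat.zero_min, e0]
      omega
    · show h (w (min i m)) ≤ h (w (min m m))
      rw [min_eq_left hi, min_self]
      have := hle1' i (hi.trans hmn)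
      omega
    · show h (w (min 0 m)) ≤ h (w (min i m))
      rw [Nat.zero_min, e0, min_eq_left hi]
      rcases Nat.eq_zero_or_pos i with rfl | hipos
      · rw [e0]
      · rw [← e0]; exact (hpos i hipos (hi.trans hmn)).le
  -- the remainder is a half-space walk for `-h`
  have hw20 : w2 0 = v := by
    show γ (w (min (m + 0) n)) = v
    rw [Nat.add_zero, min_eq_left hmn, hγm]
  have hhsw2 : IsHSWFrom G (fun x => -h x) (n - m) v w2 := by
    refine ⟨⟨⟨hw20, ?_, ?_⟩, ?_⟩, ?_⟩
    · intro i hi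
      show G.Adj (γ (w (min (m + i) n))) (γ (w (min (m + (i + 1)) n)))
      rw [min_eq_left (by omega), min_eq_left (by omega)]
      have : m + (i + 1) = (m + i) + 1 := by omega
      rw [this]
      exact γ.map_rel_iff.mpr (adjw (m + i) (by omega))
    · intro i hi
      show γ (w (min (m + i) n)) = γ (w (min (m + (n - m)) n))
      rw [min_eq_right (by omega), min_eq_right (by omega)]
    · intro x hx y hy hxy
      simp only [Set.mem_Iic] at hx hy
      have : γ (w (min (m + x) n)) = γ (w (min (m + y) n)) := hxy
      rw [min_eq_left (by omega), min_eq_left (by omega)] at this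
      have := injw (Set.mem_Iic.mpr (by omega : m + x ≤ n))
        (Set.mem_Iic.mpr (by omega : m + y ≤ n)) (γ.injective this)
      omega
    · intro i hi1 hi2
      show -h (w2 0) < -h (w2 i)
      rw [hw20]
      show -h v < -h (γ (w (min (m + i) n)))
      rw [min_eq_left (by omega), hγh]
      have := hlt1' (m + i) (by omega) (by omega)
      omega
  -- height-difference transfer
  have habs : ∀ p q : ℕ, p ≤ n - m → q ≤ n - m →
      |(-h (w2 p)) - (-h (w2 q))| = |h (w (m + p)) - h (w (m + q))| := by
    intro p q hp hq
    have ep : w2 p = γ (w (m + p)) := by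
      show γ (w (min (m + p) n)) = γ (w (m + p))
      rw [min_eq_left (by omega)]
    have eq' : w2 q = γ (w (m + q)) := by
      show γ (w (min (m + q) n)) = γ (w (m + q))
      rw [min_eq_left (by omega)]
    rw [ep, eq', hγh, hγh]
    rw [show -(h (w (m + p)) - h (w m) + h v) - -(h (w (m + q)) - h (w m) + h v)
        = -(h (w (m + p)) - h (w (m + q))) by ring, abs_neg]
  -- monotonicity of idx
  have mono : ∀ j, 1 ≤ j → j ≤ k → m ≤ idx j := by
    intro j
    induction j with
    | zero => intro h1 _; omega
    | succ j ih =>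
      intro _ hjk
      rcases Nat.eq_zero_or_pos j with rfl | hj
      · exact le_rfl
      · have h1 := ih hj (by omega)
        have h2 := (dcond (j + 1) (by omega) hjk).1
        have e : j + 1 - 1 = j := rfl
        rw [e] at h2
        omega
  have hidxn : ∀ j, 1 ≤ j → j ≤ k → idx j ≤ n := fun j hj1 hjk => (dcond j hj1 hjk).2.1
  -- the decomposition of the remainder
  have hdec : IsCanonicalDecomp (fun x => -h x) (n - m) w2 (k - 1)
      (fun j => a (j + 1)) (fun j => idx (j + 1) - m) := by
    refine ⟨?_, ?_, ?_⟩
    · show idx (0 + 1) - m = 0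
      simp [hmdef]
    · show idx ((k - 1) + 1) - m = n - m
      have e : k - 1 + 1 = k := by omega
      rw [e, dk]
    · intro j hj1 hjk1
      have hJ := dcond (j + 1) (by omega) (by omega)
      have eJ : j + 1 - 1 = j := rfl
      rw [eJ] at hJ
      obtain ⟨hlt, hle, haj, hmax, hstrict⟩ := hJ
      have hmj : m ≤ idx j := mono j hj1 (by omega)
      have hmj1 : m ≤ idx (j + 1) := mono (j + 1) (by omega) (by omega)
      have hjn : idx j ≤ n := by
        have := hidxn (j + 1) (by omega) (by omega)
        omega
      have ej : j - 1 + 1 = j := by omega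
      refine ⟨?_, ?_, ?_, ?_, ?_⟩
      · show idx ((j - 1) + 1) - m < idx (j + 1) - m
        rw [ej]
        omega
      · show idx (j + 1) - m ≤ n - m
        omega
      · show a (j + 1) = |(-h (w2 (idx (j + 1) - m))) - (-h (w2 (idx ((j - 1) + 1) - m)))|
        rw [ej, habs _ _ (by omega) (by omega),
          show m + (idx (j + 1) - m) = idx (j + 1) by omega,
          show m + (idx j - m) = idx j by omega]
        exact haj
      · intro i hi1 hi2
        have hi1' : idx ((j - 1) + 1) - m ≤ i := hi1
        rw [ej] at hi1'
        show |(-h (w2 i)) - (-h (w2 (idx ((j - 1) + 1) - m)))| ≤ a (j + 1)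
        rw [ej]
        rw [habs _ _ (by omega) (by omega), show m + (idx j - m) = idx j by omega]
        exact hmax (m + i) (by omega) (by omega)
      · intro i hi1 hi2
        have hi1' : idx (j + 1) - m < i := hi1
        show |(-h (w2 i)) - (-h (w2 (idx ((j - 1) + 1) - m)))| < a (j + 1)
        rw [ej]
        rw [habs _ _ (by omega) (by omega), show m + (idx j - m) = idx j by omega]
        exact hstrict (m + i) (by omega) (by omega)
  exact ⟨hm1, hmn, ⟨hbridge, hspan1⟩, hhsw2, hdec⟩

lemma hswSeqCount_zero (G : SimpleGraph V) (h : V → ℤ) (v : V) {k : ℕ} (hk : 1 ≤ k)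
    (a : ℕ → ℤ) : hswSeqCount G h 0 v k a = 0 := by
  unfold hswSeqCount
  rw [Nat.card_eq_zero]
  refine Or.inl ⟨fun p => ?_⟩
  obtain ⟨w, -, idx, d0, dk, dcond⟩ := p
  have h1 := (dcond 1 le_rfl hk).1
  have h2 := (dcond 1 le_rfl hk).2.1
  have e10 : (1 : ℕ) - 1 = 0 := rfl
  rw [e10, d0] at h1
  omega

lemma hsw_split (G : SimpleGraph V) (hlf : ∀ v : V, (G.neighborSet v).Finite)
    {h : V → ℤ} {Γ : Subgroup (G ≃g G)} (hghf : IsGraphHeightFunction G h Γ)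
    (htrans : ∀ u v : V, ∃ γ ∈ Γ, γ u = v)
    (n : ℕ) (v : V) (k : ℕ) (hk : 1 ≤ k) (a : ℕ → ℤ) :
    hswSeqCount G h n v k a ≤
      ∑ m ∈ Finset.range (n + 1),
        bridgeSpanCount G h m v (a 1) *
          hswSeqCount G (fun x => -h x) (n - m) v (k - 1) (fun j => a (j + 1)) := by
  classical
  set A := fun m : ℕ => {w : ℕ → V // IsBridgeFrom G h m v w ∧ walkSpan h m w = a 1} with hA
  set B := fun m : ℕ => {w : ℕ → V // IsHSWFrom G (fun x => -h x) (n - m) v w ∧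
    ∃ idx : ℕ → ℕ,
      IsCanonicalDecomp (fun x => -h x) (n - m) w (k - 1) (fun j => a (j + 1)) idx} with hB
  haveI : ∀ m, Finite (A m) := fun m => finite_of_walk hlf _ (fun w hw => hw.1.1.1)
  haveI : ∀ m, Finite (B m) := fun m => finite_of_walk hlf _ (fun w hw => hw.1.1.1)
  let f : {w : ℕ → V // IsHSWFrom G h n v w ∧ ∃ idx : ℕ → ℕ, IsCanonicalDecomp h n w k a idx}
      → Σ m : Fin (n + 1), A (m : ℕ) × B (m : ℕ) := fun p =>
    ⟨⟨p.2.2.choose 1, Nat.lt_succ_of_le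
        (hsw_decomp_step hghf htrans hk p.2.1 p.2.2.choose_spec).2.1⟩,
      ⟨⟨fun i => p.1 (min i (p.2.2.choose 1)),
        (hsw_decomp_step hghf htrans hk p.2.1 p.2.2.choose_spec).2.2.1⟩,
      ⟨fun i => pickAuto htrans (p.1 (p.2.2.choose 1)) v (p.1 (min (p.2.2.choose 1 + i) n)),
        (hsw_decomp_step hghf htrans hk p.2.1 p.2.2.choose_spec).2.2.2.1,
        ⟨fun j => p.2.2.choose (j + 1) - p.2.2.choose 1,
          (hsw_decomp_step hghf htrans hk p.2.1 p.2.2.choose_spec).2.2.2.2⟩⟩⟩⟩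
  refine card_le_sum_of_sigma_inj A B _ f ?_
  intro p q hpq
  have hp := hsw_decomp_step hghf htrans hk p.2.1 p.2.2.choose_spec
  have hq := hsw_decomp_step hghf htrans hk q.2.1 q.2.2.choose_spec
  set mp := p.2.2.choose 1 with hmp
  set mq := q.2.2.choose 1 with hmq
  have hm : mp = mq :=
    congrArg (fun s : Σ m : Fin (n + 1), A (m : ℕ) × B (m : ℕ) => (s.1 : ℕ)) hpq
  have hw1 : (fun i => p.1 (min i mp)) = (fun i => q.1 (min i mq)) :=
    congrArg (fun s : Σ m : Fin (n + 1), A (m : ℕ) × B (m : ℕ) => (s.2.1.1 : ℕ → V)) hpq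
  have hw2 : (fun i => pickAuto htrans (p.1 mp) v (p.1 (min (mp + i) n)))
      = (fun i => pickAuto htrans (q.1 mq) v (q.1 (min (mq + i) n))) :=
    congrArg (fun s : Σ m : Fin (n + 1), A (m : ℕ) × B (m : ℕ) => (s.2.2.1 : ℕ → V)) hpq
  rw [← hm] at hw1 hw2
  have hall : ∀ i, i ≤ n → p.1 i = q.1 i := by
    intro i hin
    rcases le_or_gt i mp with him | him
    · have e := congrFun hw1 i
      rwa [min_eq_left him] at e
    · have e := congrFun hw2 (i - mp)
      rw [show mp + (i - mp) = i by omega] at e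
      rw [min_eq_left hin] at e
      have hpq' : p.1 mp = q.1 mp := by
        have e' := congrFun hw1 mp
        rwa [min_self] at e'
      rw [hpq'] at e
      exact (pickAuto htrans (q.1 mp) v).injective e
  refine Subtype.ext (funext fun i => ?_)
  rcases le_or_gt i n with hin | hin
  · exact hall i hin
  · rw [p.2.1.1.1.2.2 i hin.le, q.2.1.1.1.2.2 i hin.le]
    exact hall n le_rfl

lemma hsw_base (G : SimpleGraph V) (hlf : ∀ v : V, (G.neighborSet v).Finite)
    {h : V → ℤ} {Γ : Subgroup (G ≃g G)} (hghf : IsGraphHeightFunction G h Γ)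
    (htrans : ∀ u v : V, ∃ γ ∈ Γ, γ u = v) (n : ℕ) (v : V) (a : ℕ → ℤ) :
    hswSeqCount G h n v 1 a ≤ bridgeSpanCount G h n v (a 1) := by
  classical
  haveI : Finite {w : ℕ → V // IsBridgeFrom G h n v w ∧ walkSpan h n w = a 1} :=
    finite_of_walk hlf _ (fun w hw => hw.1.1.1)
  have key : ∀ p : {w : ℕ → V // IsHSWFrom G h n v w ∧
      ∃ idx : ℕ → ℕ, IsCanonicalDecomp h n w 1 a idx},
      IsBridgeFrom G h n v (fun i => p.1 (min i n)) ∧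
        walkSpan h n (fun i => p.1 (min i n)) = a 1 := by
    intro p
    have hp := hsw_decomp_step hghf htrans le_rfl p.2.1 p.2.2.choose_spec
    have hn1 : p.2.2.choose 1 = n := p.2.2.choose_spec.2.1
    rw [hn1] at hp
    exact hp.2.2.1
  refine Nat.card_le_card_of_injective
    (fun p => ⟨fun i => p.1 (min i n), key p⟩) ?_
  intro p q hpq
  have e : (fun i => p.1 (min i n)) = (fun i => q.1 (min i n)) := congrArg Subtype.val hpq
  refine Subtype.ext (funext fun i => ?_)
  rcases le_or_gt i n with hin | hin
  · have := congrFun e i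
    rwa [min_eq_left hin] at this
  · rw [p.2.1.1.1.2.2 i hin.le, q.2.1.1.1.2.2 i hin.le]
    have := congrFun e n
    rwa [min_self] at this

lemma pos_of_dec {k : ℕ} {a : ℕ → ℤ} (ha : ∀ j, 1 ≤ j → j < k → a (j + 1) < a j)
    (hak : 0 < a k) : ∀ j, 1 ≤ j → j ≤ k → 0 < a j := by
  have key : ∀ d j, 1 ≤ j → j + d = k → 0 < a j := by
    intro d
    induction d with
    | zero =>
      intro j h1 h2
      have : j = k := by omega
      rwa [this]
    | succ d ih =>
      intro j h1 h2
      have h3 := ih (j + 1) (by omega) (by omega)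
      have h4 := ha j h1 (by omega)
      omega
  intro j hj1 hjk
  exact key (k - j) j hj1 (by omega)

lemma odd_sum_split (k : ℕ) (a : ℕ → ℤ) :
    ∑ j ∈ (Finset.Icc 1 (k + 1)).filter (fun j => Odd j), a j
      = a 1 + ∑ j ∈ (Finset.Icc 1 k).filter (fun j => Even j), a (j + 1) := by
  classical
  have h1 : (Finset.Icc 1 (k + 1)).filter (fun j => Odd j)
      = insert 1 ((Finset.Icc 2 (k + 1)).filter (fun j => Odd j)) := by
    ext j
    simp only [Finset.mem_filter, Finset.mem_Icc, Finset.mem_insert, Nat.odd_iff]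
    omega
  rw [h1, Finset.sum_insert (by simp [Finset.mem_filter, Finset.mem_Icc])]
  congr 1
  refine (Finset.sum_nbij' (fun j => j + 1) (fun j => j - 1) ?_ ?_ ?_ ?_ ?_).symm
  · intro j hj
    simp only [Finset.mem_filter, Finset.mem_Icc, Nat.even_iff, Nat.odd_iff] at hj ⊢
    omega
  · intro j hj
    simp only [Finset.mem_filter, Finset.mem_Icc, Nat.even_iff, Nat.odd_iff] at hj ⊢
    omega
  · intro j hj
    show j + 1 - 1 = j
    omega
  · intro j hj
    simp only [Finset.mem_filter, Finset.mem_Icc] at hj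
    show j - 1 + 1 = j
    omega
  · intro j hj
    rfl

lemma even_sum_shift (k : ℕ) (a : ℕ → ℤ) :
    ∑ j ∈ (Finset.Icc 1 (k + 1)).filter (fun j => Even j), a j
      = ∑ j ∈ (Finset.Icc 1 k).filter (fun j => Odd j), a (j + 1) := by
  classical
  refine (Finset.sum_nbij' (fun j => j + 1) (fun j => j - 1) ?_ ?_ ?_ ?_ ?_).symm
  · intro j hj
    simp only [Finset.mem_filter, Finset.mem_Icc, Nat.even_iff, Nat.odd_iff] at hj ⊢
    omega
  · intro j hj
    simp only [Finset.mem_filter, Finset.mem_Icc, Nat.even_iff, Nat.odd_iff] at hj ⊢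
    omega
  · intro j hj
    show j + 1 - 1 = j
    omega
  · intro j hj
    simp only [Finset.mem_filter, Finset.mem_Icc, Nat.even_iff] at hj
    show j - 1 + 1 = j
    omega
  · intro j hj
    rfl

lemma double_sum_reindex (n : ℕ) (F : ℕ → ℕ → ℕ) :
    ∑ m ∈ Finset.range (n + 1), ∑ m' ∈ Finset.range (n - m + 1), F m m'
      = ∑ M ∈ Finset.range (n + 1), ∑ m ∈ Finset.range (M + 1), F m (n - M) := by
  rw [Finset.sum_sigma', Finset.sum_sigma']
  refine Finset.sum_nbij' (fun p => ⟨n - p.2, p.1⟩) (fun q => ⟨q.2, n - q.1⟩)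
    ?_ ?_ ?_ ?_ ?_
  · rintro ⟨m, m'⟩ hp
    simp only [Finset.mem_sigma, Finset.mem_range] at hp
    show (⟨n - m', m⟩ : Σ _ : ℕ, ℕ) ∈
      (Finset.range (n + 1)).sigma fun M => Finset.range (M + 1)
    simp only [Finset.mem_sigma, Finset.mem_range]
    omega
  · rintro ⟨M, m⟩ hq
    simp only [Finset.mem_sigma, Finset.mem_range] at hq
    show (⟨m, n - M⟩ : Σ _ : ℕ, ℕ) ∈
      (Finset.range (n + 1)).sigma fun m => Finset.range (n - m + 1)
    simp only [Finset.mem_sigma, Finset.mem_range]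
    omega
  · rintro ⟨m, m'⟩ hp
    simp only [Finset.mem_sigma, Finset.mem_range] at hp
    show (⟨m, n - (n - m')⟩ : Σ _ : ℕ, ℕ) = ⟨m, m'⟩
    have e : n - (n - m') = m' := by omega
    rw [e]
  · rintro ⟨M, m⟩ hq
    simp only [Finset.mem_sigma, Finset.mem_range] at hq
    show (⟨n - (n - M), m⟩ : Σ _ : ℕ, ℕ) = ⟨M, m⟩
    have e : n - (n - M) = M := by omega
    rw [e]
  · rintro ⟨m, m'⟩ hp
    simp only [Finset.mem_sigma, Finset.mem_range] at hp
    show F m m' = F m (n - (n - m'))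
    have e : n - (n - m') = m' := by omega
    rw [e]

end Aux

/-- In the transitive case,
`h_n(a_1,…,a_k) ≤ Σ_{m=0}^{n} b_m(a_1+a_3+…) · b̄_{n−m}(a_2+a_4+…)`. -/
theorem statement_4 {V : Type*} (G : SimpleGraph V)
    (hinf : Infinite V) (hlf : ∀ v : V, (G.neighborSet v).Finite) (hconn : G.Connected)
    (h : V → ℤ) (Γ : Subgroup (G ≃g G)) (hghf : IsGraphHeightFunction G h Γ)
    (htrans : ∀ u v : V, ∃ γ ∈ Γ, γ u = v)
    (n k : ℕ) (hn : 1 ≤ n) (hk : 1 ≤ k) (a : ℕ → ℤ)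
    (ha : ∀ j, 1 ≤ j → j < k → a (j + 1) < a j) (hak : 0 < a k) (v : V) :
    hswSeqCount G h n v k a ≤
      ∑ m ∈ Finset.range (n + 1),
        bridgeSpanCount G h m v (∑ j ∈ (Finset.Icc 1 k).filter (fun j => Odd j), a j) *
          rbridgeSpanCount G h (n - m) v
            (∑ j ∈ (Finset.Icc 1 k).filter (fun j => Even j), a j) := by
  clear hn
  have main : ∀ k : ℕ, 1 ≤ k → ∀ hh : V → ℤ, IsGraphHeightFunction G hh Γ →
      ∀ (n : ℕ) (a : ℕ → ℤ), (∀ j, 1 ≤ j → j < k → a (j + 1) < a j) → 0 < a k → ∀ v : V,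
      hswSeqCount G hh n v k a ≤
        ∑ m ∈ Finset.range (n + 1),
          bridgeSpanCount G hh m v (∑ j ∈ (Finset.Icc 1 k).filter (fun j => Odd j), a j) *
            rbridgeSpanCount G hh (n - m) v
              (∑ j ∈ (Finset.Icc 1 k).filter (fun j => Even j), a j) := by
    intro k
    induction k with
    | zero => intro h0; exact absurd h0 (by omega)
    | succ k ih =>
      intro _ hh hghf' n a ha' hak' v
      rcases Nat.eq_zero_or_pos k with rfl | hk1
      · -- base case `k + 1 = 1`
        have e1 : ∑ j ∈ (Finset.Icc 1 1).filter (fun j => Odd j), a j = a 1 := by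
          rw [Finset.Icc_self, Finset.filter_singleton]
          simp [Nat.odd_iff]
        have e2 : ∑ j ∈ (Finset.Icc 1 1).filter (fun j => Even j), a j = 0 := by
          rw [Finset.Icc_self, Finset.filter_singleton]
          simp [Nat.even_iff]
        rw [e1, e2]
        refine (hsw_base G hlf hghf' htrans n v a).trans ?_
        have hmem : n ∈ Finset.range (n + 1) := Finset.mem_range.mpr (by omega)
        have e3 : bridgeSpanCount G hh n v (a 1) * rbridgeSpanCount G hh (n - n) v 0
            = bridgeSpanCount G hh n v (a 1) := by
          rw [Nat.sub_self, rbridgeSpanCount_zero, mul_one]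
        calc bridgeSpanCount G hh n v (a 1)
            = bridgeSpanCount G hh n v (a 1) * rbridgeSpanCount G hh (n - n) v 0 := e3.symm
          _ ≤ _ := Finset.single_le_sum
              (f := fun m => bridgeSpanCount G hh m v (a 1) * rbridgeSpanCount G hh (n - m) v 0)
              (fun i _ => Nat.zero_le _) hmem
      · -- inductive step: `k + 1 ≥ 2`
        have hghfneg := isGraphHeightFunction_neg hghf'
        have apos := pos_of_dec ha' hak'
        have hs1 : 0 < a 1 := apos 1 le_rfl (by omega)
        have hSe0 : (0 : ℤ) ≤ ∑ j ∈ (Finset.Icc 1 k).filter (fun j => Even j), a (j + 1) := by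
          refine Finset.sum_nonneg fun j hj => ?_
          simp only [Finset.mem_filter, Finset.mem_Icc] at hj
          exact (apos (j + 1) (by omega) (by omega)).le
        rw [odd_sum_split k a, even_sum_shift k a]
        have step1 : hswSeqCount G hh n v (k + 1) a ≤
            ∑ m ∈ Finset.range (n + 1),
              bridgeSpanCount G hh m v (a 1) *
                hswSeqCount G (fun x => -hh x) (n - m) v k (fun j => a (j + 1)) :=
          hsw_split G hlf hghf' htrans n v (k + 1) (by omega) a
        have step2 : ∀ m : ℕ,
            hswSeqCount G (fun x => -hh x) (n - m) v k (fun j => a (j + 1)) ≤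
            ∑ m' ∈ Finset.range (n - m + 1),
              rbridgeSpanCount G hh m' v
                  (∑ j ∈ (Finset.Icc 1 k).filter (fun j => Odd j), a (j + 1)) *
                bridgeSpanCount G hh (n - m - m') v
                  (∑ j ∈ (Finset.Icc 1 k).filter (fun j => Even j), a (j + 1)) := by
          intro m
          have H := ih hk1 (fun x => -hh x) hghfneg (n - m) (fun j => a (j + 1))
            (fun j hj1 hjk => ha' (j + 1) (by omega) (by omega)) hak' v
          refine H.trans (le_of_eq (Finset.sum_congr rfl fun m' _ => ?_))
          rw [← rbridgeSpanCount_eq_neg G hh m' v, ← bridgeSpanCount_eq_neg G hh (n - m - m') v]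
        calc hswSeqCount G hh n v (k + 1) a
            ≤ ∑ m ∈ Finset.range (n + 1),
              bridgeSpanCount G hh m v (a 1) *
                hswSeqCount G (fun x => -hh x) (n - m) v k (fun j => a (j + 1)) := step1
          _ ≤ ∑ m ∈ Finset.range (n + 1),
              bridgeSpanCount G hh m v (a 1) *
                ∑ m' ∈ Finset.range (n - m + 1),
                  rbridgeSpanCount G hh m' v
                      (∑ j ∈ (Finset.Icc 1 k).filter (fun j => Odd j), a (j + 1)) *
                    bridgeSpanCount G hh (n - m - m')
                      v (∑ j ∈ (Finset.Icc 1 k).filter (fun j => Even j), a (j + 1)) :=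
              Finset.sum_le_sum fun m _ => Nat.mul_le_mul_left _ (step2 m)
          _ = ∑ m ∈ Finset.range (n + 1), ∑ m' ∈ Finset.range (n - m + 1),
              (bridgeSpanCount G hh m v (a 1) *
                bridgeSpanCount G hh (n - m - m') v
                  (∑ j ∈ (Finset.Icc 1 k).filter (fun j => Even j), a (j + 1))) *
                rbridgeSpanCount G hh m' v
                  (∑ j ∈ (Finset.Icc 1 k).filter (fun j => Odd j), a (j + 1)) := by
              refine Finset.sum_congr rfl fun m _ => ?_
              rw [Finset.mul_sum]
              refine Finset.sum_congr rfl fun m' _ => ?_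
              ring
          _ = ∑ M ∈ Finset.range (n + 1), ∑ m ∈ Finset.range (M + 1),
              (bridgeSpanCount G hh m v (a 1) *
                bridgeSpanCount G hh (n - m - (n - M)) v
                  (∑ j ∈ (Finset.Icc 1 k).filter (fun j => Even j), a (j + 1))) *
                rbridgeSpanCount G hh (n - M) v
                  (∑ j ∈ (Finset.Icc 1 k).filter (fun j => Odd j), a (j + 1)) :=
              double_sum_reindex n _
          _ = ∑ M ∈ Finset.range (n + 1),
              (∑ m ∈ Finset.range (M + 1), bridgeSpanCount G hh m v (a 1) *
                bridgeSpanCount G hh (M - m) v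
                  (∑ j ∈ (Finset.Icc 1 k).filter (fun j => Even j), a (j + 1))) *
                rbridgeSpanCount G hh (n - M) v
                  (∑ j ∈ (Finset.Icc 1 k).filter (fun j => Odd j), a (j + 1)) := by
              refine Finset.sum_congr rfl fun M hM => ?_
              have hMn : M ≤ n := by
                have := Finset.mem_range.mp hM; omega
              rw [Finset.sum_mul]
              refine Finset.sum_congr rfl fun m hm => ?_
              have hmM : m ≤ M := by
                have := Finset.mem_range.mp hm; omega
              rw [show n - m - (n - M) = M - m by omega]
          _ ≤ ∑ M ∈ Finset.range (n + 1),
              bridgeSpanCount G hh M v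
                  (a 1 + ∑ j ∈ (Finset.Icc 1 k).filter (fun j => Even j), a (j + 1)) *
                rbridgeSpanCount G hh (n - M) v
                  (∑ j ∈ (Finset.Icc 1 k).filter (fun j => Odd j), a (j + 1)) :=
              Finset.sum_le_sum fun M _ => Nat.mul_le_mul_right _
                (bridge_merge G hlf hghf' htrans M v (a 1) _ hs1 hSe0)
  exact main k hk h hghf n a ha hak v
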